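/- (Example 3.4, infinitesimal cocycle.) Let q ∈ ℂ be nonzero and not a root of unity, and let Ψ^{(1)} : A_q⊗B → B⊗A_q be the ℂ-linear map determined by Ψ^{(1)}(a^kā^l ⊗ b^r) = q^{lr}·[k]_q·[r]_q·b^{r+1}⊗a^{k−1}ā^{l+1} for k ≥ 1 and Ψ^{(1)}(a^0ā^l ⊗ b^r) = 0. Then Ψ^{(1)} is a 2-cocycle: (id_B⊗μ_{A_q})∘(Ψ^{(1)}⊗id_{A_q})∘(id_{A_q}⊗Ψ_0) + (id_B⊗μ_{A_q})∘(Ψ_0⊗id_{A_q})∘(id_{A_q}⊗Ψ^{(1)}) = Ψ^{(1)}∘(μ_{A_q}⊗id_B) and (μ_B⊗id_{A_q})∘(id_B⊗Ψ^{(1)})∘(Ψ_0⊗id_B) + (μ_B⊗id_{A_q})∘(id_B⊗Ψ_0)∘(Ψ^{(1)}⊗id_B) = Ψ^{(1)}∘(id_{A_q}⊗μ_B). -/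

import Mathlib

/-!
STATEMENT 11 (Example 3.4, infinitesimal cocycle): for `q` nonzero and not a
root of unity, `Ψ⁽¹⁾(a^k ā^l ⊗ b^r) = q^{lr}[k][r] b^{r+1} ⊗ a^{k−1} ā^{l+1}`
is a 2-cocycle for the factorisation of Example 3.4.
-/
open TensorProduct

section Defs

variable {k : Type*} [CommRing k]
variable {A B : Type*} [AddCommGroup A] [Module k A] [AddCommGroup B] [Module k B]

/-- `(id_B ⊗ μ) ∘ (ψ ⊗ id_A)` as a map `A ⊗ (B ⊗ A) → B ⊗ A`. -/
noncomputable def twL (μ : A ⊗[k] A →ₗ[k] A) (ψ : A ⊗[k] B →ₗ[k] B ⊗[k] A) :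
    A ⊗[k] (B ⊗[k] A) →ₗ[k] B ⊗[k] A :=
  LinearMap.lTensor B μ ∘ₗ (TensorProduct.assoc k B A A).toLinearMap
    ∘ₗ LinearMap.rTensor A ψ ∘ₗ (TensorProduct.assoc k A B A).symm.toLinearMap

/-- `(ν ⊗ id_A) ∘ (id_B ⊗ ψ)` as a map `(B ⊗ A) ⊗ B → B ⊗ A`. -/
noncomputable def twR (ν : B ⊗[k] B →ₗ[k] B) (ψ : A ⊗[k] B →ₗ[k] B ⊗[k] A) :
    (B ⊗[k] A) ⊗[k] B →ₗ[k] B ⊗[k] A :=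
  LinearMap.rTensor A ν ∘ₗ (TensorProduct.assoc k B B A).symm.toLinearMap
    ∘ₗ LinearMap.lTensor B ψ ∘ₗ (TensorProduct.assoc k B A B).toLinearMap

end Defs

/-- The underlying module of the algebra `A_q`: the free `ℂ`-module with basis
`{a^k ā^l : (k,l) ∈ ℕ × ℕ}`, a basis element being `Finsupp.single (k,l) 1`. -/
abbrev Aq : Type := (ℕ × ℕ) →₀ ℂ

/-- `B = ℂ[b]`, the polynomial algebra, with basis `{b^r = Finsupp.single r 1}`. -/
abbrev Bpoly : Type := AddMonoidAlgebra ℂ ℕ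

/-- The multiplication of `A_q`: `(a^k ā^l)·(a^r ā^s) = q^{lr}·a^{k+r} ā^{l+s}`,
as a bilinear map. -/
noncomputable def muq (q : ℂ) : Aq →ₗ[ℂ] Aq →ₗ[ℂ] Aq :=
  Finsupp.lift (Aq →ₗ[ℂ] Aq) ℂ (ℕ × ℕ) fun p =>
    Finsupp.lift Aq ℂ (ℕ × ℕ) fun p' =>
      (q ^ (p.2 * p'.1)) • Finsupp.single (p.1 + p'.1, p.2 + p'.2) (1 : ℂ)

/-- The map `Ψ₀ : A_q ⊗ B → B ⊗ A_q`, `a^k ā^l ⊗ b^r ↦ q^{lr}·b^r ⊗ a^k ā^l`. -/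
noncomputable def psiq0 (q : ℂ) : Aq ⊗[ℂ] Bpoly →ₗ[ℂ] Bpoly ⊗[ℂ] Aq :=
  TensorProduct.lift <|
    Finsupp.lift (Bpoly →ₗ[ℂ] Bpoly ⊗[ℂ] Aq) ℂ (ℕ × ℕ) fun p =>
      (Finsupp.lift (Bpoly ⊗[ℂ] Aq) ℂ ℕ fun r =>
        (q ^ (p.2 * r)) •
          ((AddMonoidAlgebra.single r (1 : ℂ) : Bpoly) ⊗ₜ[ℂ] (Finsupp.single p (1 : ℂ) : Aq)))
        ∘ₗ (AddMonoidAlgebra.coeffLinearEquiv ℂ).toLinearMap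


/-- The `q`-integer `[m]_q = 1 + q + ⋯ + q^{m−1}`. -/
noncomputable def qint (q : ℂ) (m : ℕ) : ℂ := ∑ i ∈ Finset.range m, q ^ i

/-- `Ψ⁽¹⁾ : A_q ⊗ B → B ⊗ A_q`,
`a^k ā^l ⊗ b^r ↦ q^{lr}·[k]_q·[r]_q·b^{r+1} ⊗ a^{k−1} ā^{l+1}`
(which vanishes for `k = 0`, as `[0]_q = 0`). -/
noncomputable def psiq1 (q : ℂ) : Aq ⊗[ℂ] Bpoly →ₗ[ℂ] Bpoly ⊗[ℂ] Aq :=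
  TensorProduct.lift <|
    Finsupp.lift (Bpoly →ₗ[ℂ] Bpoly ⊗[ℂ] Aq) ℂ (ℕ × ℕ) fun p =>
      (Finsupp.lift (Bpoly ⊗[ℂ] Aq) ℂ ℕ fun r =>
        (q ^ (p.2 * r) * qint q p.1 * qint q r) •
          ((AddMonoidAlgebra.single (r + 1) (1 : ℂ) : Bpoly)
            ⊗ₜ[ℂ] (Finsupp.single (p.1 - 1, p.2 + 1) (1 : ℂ) : Aq)))
        ∘ₗ (AddMonoidAlgebra.coeffLinearEquiv ℂ).toLinearMap


section EvalLemmas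
variable {k : Type*} [CommRing k]
variable {A B : Type*} [AddCommGroup A] [Module k A] [AddCommGroup B] [Module k B]

lemma twL_eval (μ : A ⊗[k] A →ₗ[k] A) (ψ : A ⊗[k] B →ₗ[k] B ⊗[k] A)
    (x y x' : A) (u u' : B) (c : k) (h : ψ (x ⊗ₜ[k] u) = c • (u' ⊗ₜ[k] x')) :
    twL μ ψ (x ⊗ₜ[k] (u ⊗ₜ[k] y)) = c • (u' ⊗ₜ[k] μ (x' ⊗ₜ[k] y)) := by
  simp [twL, h, TensorProduct.smul_tmul']

lemma twR_eval (ν : B ⊗[k] B →ₗ[k] B) (ψ : A ⊗[k] B →ₗ[k] B ⊗[k] A)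
    (x x' : A) (u v v' : B) (c : k) (h : ψ (x ⊗ₜ[k] v) = c • (v' ⊗ₜ[k] x')) :
    twR ν ψ ((u ⊗ₜ[k] x) ⊗ₜ[k] v) = c • (ν (u ⊗ₜ[k] v') ⊗ₜ[k] x') := by
  simp only [twR, LinearMap.comp_apply, LinearEquiv.coe_coe, TensorProduct.assoc_tmul,
    LinearMap.lTensor_tmul, h, TensorProduct.tmul_smul, map_smul,
    TensorProduct.assoc_symm_tmul, LinearMap.rTensor_tmul]
end EvalLemmas

lemma muq_single (q : ℂ) (p p' : ℕ × ℕ) (c c' : ℂ) :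
    muq q (Finsupp.single p c) (Finsupp.single p' c') =
      (c * c' * q ^ (p.2 * p'.1)) • Finsupp.single (p.1 + p'.1, p.2 + p'.2) (1 : ℂ) := by
  simp [muq, Finsupp.lift_apply, Finsupp.sum_single_index, mul_smul, smul_smul]

lemma psiq0_single (q : ℂ) (p : ℕ × ℕ) (r : ℕ) (c d : ℂ) :
    psiq0 q (Finsupp.single p c ⊗ₜ[ℂ] AddMonoidAlgebra.single r d) =
      (c * d * q ^ (p.2 * r)) •
        ((AddMonoidAlgebra.single r (1 : ℂ) : Bpoly) ⊗ₜ[ℂ] (Finsupp.single p (1 : ℂ) : Aq)) := by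
  rw [psiq0, TensorProduct.lift.tmul]
  simp only [Finsupp.lift_apply]
  rw [Finsupp.sum_single_index (by simp), LinearMap.smul_apply, LinearMap.comp_apply]
  erw [Finsupp.lift_apply, Finsupp.sum_single_index (by simp)]
  rw [smul_smul, smul_smul]

lemma psiq1_single (q : ℂ) (p : ℕ × ℕ) (r : ℕ) (c d : ℂ) :
    psiq1 q (Finsupp.single p c ⊗ₜ[ℂ] AddMonoidAlgebra.single r d) =
      (c * d * (q ^ (p.2 * r) * qint q p.1 * qint q r)) •
        ((AddMonoidAlgebra.single (r + 1) (1 : ℂ) : Bpoly)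
          ⊗ₜ[ℂ] (Finsupp.single (p.1 - 1, p.2 + 1) (1 : ℂ) : Aq)) := by
  rw [psiq1, TensorProduct.lift.tmul]
  simp only [Finsupp.lift_apply]
  rw [Finsupp.sum_single_index (by simp), LinearMap.smul_apply, LinearMap.comp_apply]
  erw [Finsupp.lift_apply, Finsupp.sum_single_index (by simp)]
  rw [smul_smul, smul_smul]

lemma qint_add (q : ℂ) (m n : ℕ) : qint q (m + n) = qint q m + q ^ m * qint q n := by
  simp [qint, Finset.sum_range_add, pow_add, Finset.mul_sum]

lemma qint_zero (q : ℂ) : qint q 0 = 0 := by simp [qint]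

lemma qint_comm (q : ℂ) (m n : ℕ) :
    qint q (m + n) = qint q n + q ^ n * qint q m := by
  rw [add_comm m n, qint_add]

lemma mulB_single (r s : ℕ) (c d : ℂ) :
    LinearMap.mul' ℂ Bpoly ((AddMonoidAlgebra.single r c : Bpoly) ⊗ₜ[ℂ] (AddMonoidAlgebra.single s d : Bpoly)) =
      (AddMonoidAlgebra.single (r + s) (c * d) : Bpoly) := by
  simp [LinearMap.mul'_apply, AddMonoidAlgebra.single_mul_single]

set_option maxHeartbeats 1000000 in
lemma aux_E3 (q : ℂ) :
    (∀ (x y : Aq) (u : Bpoly),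
        twL (TensorProduct.lift (muq q)) (psiq1 q) (x ⊗ₜ[ℂ] psiq0 q (y ⊗ₜ[ℂ] u))
          + twL (TensorProduct.lift (muq q)) (psiq0 q) (x ⊗ₜ[ℂ] psiq1 q (y ⊗ₜ[ℂ] u))
          = psiq1 q (muq q x y ⊗ₜ[ℂ] u)) := by
  intro x y u
  induction x using Finsupp.induction_linear with
  | zero => simp
  | add f g hf hg =>
      simp only [add_tmul, map_add, LinearMap.add_apply]
      rw [add_add_add_comm, hf, hg]
  | single p c =>
    induction y using Finsupp.induction_linear with
    | zero => simp
    | add f g hf hg =>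
        simp only [add_tmul, tmul_add, map_add, LinearMap.add_apply]
        rw [add_add_add_comm, hf, hg]
    | single p' c' =>
      induction u using AddMonoidAlgebra.induction_linear with
      | zero => simp
      | add f g hf hg =>
          simp only [add_tmul, tmul_add, map_add, LinearMap.add_apply]
          rw [add_add_add_comm, hf, hg]
      | single r d =>
        obtain ⟨k, l⟩ := p
        obtain ⟨k', l'⟩ := p'
        rw [psiq0_single, psiq1_single, muq_single, tmul_smul, tmul_smul,
          map_smul, map_smul, ← TensorProduct.smul_tmul', map_smul,
          twL_eval _ _ _ _ _ _ _ _ (psiq1_single q (k, l) r c 1),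
          twL_eval _ _ _ _ _ _ _ _ (psiq0_single q (k, l) (r + 1) c 1),
          TensorProduct.lift.tmul, TensorProduct.lift.tmul,
          muq_single, muq_single, psiq1_single]
        simp only [smul_smul, TensorProduct.tmul_smul]
        rcases k with _ | k <;> rcases k' with _ | k'
        · simp [qint_zero]
        · simp only [qint_zero, Nat.zero_add, Nat.add_sub_cancel, Nat.succ_sub_one,
            mul_zero, zero_mul, zero_smul, zero_add, mul_one, one_mul]
          rw [show l + (l' + 1) = l + l' + 1 from by omega]
          congr 1
          ring
        · simp only [qint_zero, Nat.add_zero, Nat.add_sub_cancel, Nat.succ_sub_one,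
            mul_zero, zero_mul, zero_smul, add_zero, mul_one, one_mul]
          rw [show l + 1 + l' = l + l' + 1 from by omega]
          congr 1
          ring
        · simp only [Nat.succ_sub_one, mul_one, one_mul]
          rw [show k + (k' + 1) = k + 1 + k' from by omega,
            show l + 1 + l' = l + l' + 1 from by omega,
            show l + (l' + 1) = l + l' + 1 from by omega,
            show k + 1 + (k' + 1) - 1 = k + 1 + k' from by omega,
            ← add_smul]
          congr 1
          rw [qint_comm q (k + 1) (k' + 1)]
          ring

set_option maxHeartbeats 1000000 in
lemma aux_E4 (q : ℂ) :
    (∀ (x : Aq) (u v : Bpoly),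
        twR (LinearMap.mul' ℂ Bpoly) (psiq1 q) (psiq0 q (x ⊗ₜ[ℂ] u) ⊗ₜ[ℂ] v)
          + twR (LinearMap.mul' ℂ Bpoly) (psiq0 q) (psiq1 q (x ⊗ₜ[ℂ] u) ⊗ₜ[ℂ] v)
          = psiq1 q (x ⊗ₜ[ℂ] (u * v))) := by
  intro x u v
  induction x using Finsupp.induction_linear with
  | zero => simp
  | add f g hf hg =>
      simp only [add_tmul, map_add, LinearMap.add_apply]
      rw [add_add_add_comm, hf, hg]
  | single p c =>
    induction u using AddMonoidAlgebra.induction_linear with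
    | zero => simp
    | add f g hf hg =>
        simp only [add_tmul, tmul_add, map_add, add_mul, LinearMap.add_apply]
        rw [add_add_add_comm, hf, hg]
    | single r d =>
      induction v using AddMonoidAlgebra.induction_linear with
      | zero => simp
      | add f g hf hg =>
          simp only [add_tmul, tmul_add, map_add, mul_add, LinearMap.add_apply]
          rw [add_add_add_comm, hf, hg]
      | single s e =>
        obtain ⟨k, l⟩ := p
        rw [psiq0_single, psiq1_single, ← TensorProduct.smul_tmul',
          ← TensorProduct.smul_tmul', map_smul, map_smul,
          twR_eval _ _ _ _ _ _ _ _ (psiq1_single q (k, l) s 1 e),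
          twR_eval _ _ _ _ _ _ _ _ (psiq0_single q (k - 1, l + 1) s 1 e),
          mulB_single, mulB_single, AddMonoidAlgebra.single_mul_single, psiq1_single]
        simp only [smul_smul, TensorProduct.tmul_smul, mul_one, one_mul]
        rw [show r + (s + 1) = r + s + 1 from by omega,
          show r + 1 + s = r + s + 1 from by omega, ← add_smul]
        congr 1
        rw [qint_comm q r s]
        ring

/-- Example 3.4, infinitesimal cocycle: `Ψ⁽¹⁾` is a
2-cocycle in `C•(X(B,A))`, i.e. satisfies (E3) and (E4) with
`μ_A⁽¹⁾ = 0`, `μ_B⁽¹⁾ = 0`. -/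
theorem quantum_plane_infinitesimal_cocycle (q : ℂ) (hq : q ≠ 0)
    (hqroot : ∀ m : ℕ, 1 ≤ m → q ^ m ≠ 1) :
    letI μA : Aq ⊗[ℂ] Aq →ₗ[ℂ] Aq := TensorProduct.lift (muq q)
    letI μB := LinearMap.mul' ℂ Bpoly
    letI ψ := psiq0 q
    letI ψ₁ := psiq1 q
    -- (E3) with μ_A⁽¹⁾ = 0
    (∀ (x y : Aq) (u : Bpoly),
        twL μA ψ₁ (x ⊗ₜ[ℂ] ψ (y ⊗ₜ[ℂ] u)) + twL μA ψ (x ⊗ₜ[ℂ] ψ₁ (y ⊗ₜ[ℂ] u))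
          = ψ₁ (muq q x y ⊗ₜ[ℂ] u)) ∧
    -- (E4) with μ_B⁽¹⁾ = 0
    (∀ (x : Aq) (u v : Bpoly),
        twR μB ψ₁ (ψ (x ⊗ₜ[ℂ] u) ⊗ₜ[ℂ] v) + twR μB ψ (ψ₁ (x ⊗ₜ[ℂ] u) ⊗ₜ[ℂ] v)
          = ψ₁ (x ⊗ₜ[ℂ] (u * v))) := by
  exact ⟨aux_E3 q, aux_E4 q⟩
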